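/- Bäcklund transformation theorem for vessels: let (A, B(x), X(x); σ₁, σ₂, γ, γ*(x)) be a finite-dimensional vessel on an interval I, i.e., d/dx(B σ₁) = −A B σ₂ − B γ, dX/dx = B σ₂ B*, A X + X A* + B σ₁ B* = 0, X(x) invertible self-adjoint, and γ*(x) = γ + σ₂ B* X⁻¹ B σ₁ − σ₁ B* X⁻¹ B σ₂. Fix λ ∉ spec(A) and suppose u : I → ℂᵖ is differentiable and satisfies −σ₁ u′(x) + (λ σ₂ + γ) u(x) = 0. Then y(x) := S(λ,x) u(x), with S(λ,x) = I − B(x)* X(x)⁻¹ (λI − A)⁻¹ B(x) σ₁, is differentiable and satisfies −σ₁ y′(x) + (λ σ₂ + γ*(x)) y(x) = 0. -/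

import Mathlib

open Matrix

attribute [local instance] Matrix.normedAddCommGroup Matrix.normedSpace

theorem hasDerivAt_matrix {a b : ℕ} {f : ℝ → Matrix (Fin a) (Fin b) ℂ}
    {f' : Matrix (Fin a) (Fin b) ℂ} {x : ℝ} :
    HasDerivAt f f' x ↔ ∀ i j, HasDerivAt (fun t => f t i j) (f' i j) x := by
  constructor
  · intro h i j
    exact hasDerivAt_pi.mp (hasDerivAt_pi.mp h i) j
  · intro h
    exact hasDerivAt_pi.mpr fun i => hasDerivAt_pi.mpr (h i)

theorem HasDerivAt.matMul {a b c : ℕ} {f : ℝ → Matrix (Fin a) (Fin b) ℂ}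
    {g : ℝ → Matrix (Fin b) (Fin c) ℂ} {f' g'} {x : ℝ}
    (hf : HasDerivAt f f' x) (hg : HasDerivAt g g' x) :
    HasDerivAt (fun t => f t * g t) (f' * g x + f x * g') x := by
  rw [hasDerivAt_matrix] at hf hg ⊢
  intro i j
  have h : (f' * g x + f x * g') i j
      = ∑ k, (f' i k * g x k j + f x i k * g' k j) := by
    simp [Matrix.mul_apply, Matrix.add_apply, Finset.sum_add_distrib]
  rw [h]
  simp only [Matrix.mul_apply]
  exact HasDerivAt.fun_sum fun k _ => (hf i k).mul (hg k j)

theorem HasDerivAt.matMulVec {a b : ℕ} {f : ℝ → Matrix (Fin a) (Fin b) ℂ}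
    {v : ℝ → Fin b → ℂ} {f' : Matrix (Fin a) (Fin b) ℂ} {v' : Fin b → ℂ} {x : ℝ}
    (hf : HasDerivAt f f' x) (hv : HasDerivAt v v' x) :
    HasDerivAt (fun t => (f t).mulVec (v t)) (f'.mulVec (v x) + (f x).mulVec v') x := by
  rw [hasDerivAt_pi]
  intro i
  have h : (f'.mulVec (v x) + (f x).mulVec v') i
      = ∑ k, (f' i k * v x k + f x i k * v' k) := by
    simp [Matrix.mulVec, dotProduct, Finset.sum_add_distrib]
  rw [h]
  simp only [Matrix.mulVec, dotProduct]
  exact HasDerivAt.fun_sum fun k _ =>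
    ((hasDerivAt_matrix.mp hf i k).mul (hasDerivAt_pi.mp hv k))

theorem HasDerivAt.matCT {a b : ℕ} {f : ℝ → Matrix (Fin a) (Fin b) ℂ}
    {f' : Matrix (Fin a) (Fin b) ℂ} {x : ℝ} (hf : HasDerivAt f f' x) :
    HasDerivAt (fun t => (f t)ᴴ) f'ᴴ x := by
  rw [hasDerivAt_matrix] at hf ⊢
  intro i j
  simp only [Matrix.conjTranspose_apply]
  exact (hf j i).star

theorem differentiableAt_matdet {a : ℕ} {M : ℝ → Matrix (Fin a) (Fin a) ℂ} {x : ℝ}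
    (h : ∀ i j, DifferentiableAt ℝ (fun t => M t i j) x) :
    DifferentiableAt ℝ (fun t => (M t).det) x := by
  simp only [Matrix.det_apply]
  apply DifferentiableAt.fun_sum
  intro σ _
  simp only [Units.smul_def, zsmul_eq_mul]
  exact ((DifferentiableAt.fun_finsetProd fun i _ => h (σ i) i)).const_mul _

theorem hasDerivAt_matinv {a : ℕ} {X : ℝ → Matrix (Fin a) (Fin a) ℂ}
    {X' : Matrix (Fin a) (Fin a) ℂ} {x : ℝ}
    (hX : HasDerivAt X X' x) (hinv : ∀ t, IsUnit (X t)) :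
    HasDerivAt (fun t => (X t)⁻¹) (-((X x)⁻¹ * X' * (X x)⁻¹)) x := by
  have hent : ∀ i j, DifferentiableAt ℝ (fun t => X t i j) x :=
    fun i j => ((hasDerivAt_matrix.mp hX) i j).differentiableAt
  have hdet : DifferentiableAt ℝ (fun t => (X t).det) x := differentiableAt_matdet hent
  have hdetu : ∀ t, IsUnit (X t).det := fun t => (Matrix.isUnit_iff_isUnit_det _).mp (hinv t)
  have hdetne : (X x).det ≠ 0 := (hdetu x).ne_zero
  have hadj : ∀ i j, DifferentiableAt ℝ (fun t => (X t).adjugate i j) x := by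
    intro i j
    simp only [Matrix.adjugate_apply]
    apply differentiableAt_matdet
    intro i' j'
    by_cases hij : i' = j
    · simp only [Matrix.updateRow_apply, if_pos hij]
      exact differentiableAt_const _
    · simp only [Matrix.updateRow_apply, if_neg hij]
      exact hent i' j'
  have hdiff : DifferentiableAt ℝ (fun t => (X t)⁻¹) x := by
    refine differentiableAt_pi.mpr ?_; intro i; refine differentiableAt_pi.mpr ?_; intro j
    have he : (fun t => (X t)⁻¹ i j) = fun t => ((X t).det)⁻¹ * (X t).adjugate i j := by
      funext t
      rw [Matrix.inv_def, Ring.inverse_eq_inv']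
      simp [Matrix.smul_apply, smul_eq_mul]
    rw [he]
    exact (hdet.inv hdetne).mul (hadj i j)
  have hW : HasDerivAt (fun t => (X t)⁻¹) (deriv (fun t => (X t)⁻¹) x) x := hdiff.hasDerivAt
  set W := deriv (fun t => (X t)⁻¹) x with hWdef
  have hmul : HasDerivAt (fun t => X t * (X t)⁻¹) (X' * (X x)⁻¹ + X x * W) x := hX.matMul hW
  have hconst : (fun t => X t * (X t)⁻¹) = fun _ => (1 : Matrix (Fin a) (Fin a) ℂ) :=
    funext fun t => Matrix.mul_nonsing_inv _ (hdetu t)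
  rw [hconst] at hmul
  have h0 : X' * (X x)⁻¹ + X x * W = 0 := hmul.unique (hasDerivAt_const x 1)
  have h1 : X x * W = -(X' * (X x)⁻¹) :=
    eq_neg_of_add_eq_zero_left (by rw [add_comm]; exact h0)
  have hWeq : W = -((X x)⁻¹ * X' * (X x)⁻¹) := by
    calc W = ((X x)⁻¹ * X x) * W := by rw [Matrix.nonsing_inv_mul _ (hdetu x), Matrix.one_mul]
    _ = (X x)⁻¹ * (X x * W) := by rw [Matrix.mul_assoc]
    _ = (X x)⁻¹ * -(X' * (X x)⁻¹) := by rw [h1]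
    _ = -((X x)⁻¹ * X' * (X x)⁻¹) := by rw [Matrix.mul_neg, Matrix.mul_assoc]
  exact hWeq ▸ hW

set_option maxHeartbeats 1600000 in
/-- Bäcklund transformation theorem: the transfer function `S(λ,x)` of a vessel maps
solutions of the input LDE to solutions of the output LDE. -/
theorem stmt4 {n p : ℕ}
    (σ₁ σ₂ γ : Matrix (Fin p) (Fin p) ℂ)
    (hσ₁ : σ₁.IsHermitian) (hσ₁inv : IsUnit σ₁) (hσ₂ : σ₂.IsHermitian)
    (hγ : γᴴ = -γ)
    (A : Matrix (Fin n) (Fin n) ℂ)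
    (B : ℝ → Matrix (Fin n) (Fin p) ℂ) (X : ℝ → Matrix (Fin n) (Fin n) ℂ)
    (hB : ∀ x : ℝ, HasDerivAt (fun y => B y * σ₁) (-(A * B x * σ₂) - B x * γ) x)
    (hX : ∀ x : ℝ, HasDerivAt X (B x * σ₂ * (B x)ᴴ) x)
    (hLyap : ∀ x : ℝ, A * X x + X x * Aᴴ + B x * σ₁ * (B x)ᴴ = 0)
    (hXh : ∀ x : ℝ, (X x).IsHermitian) (hXinv : ∀ x : ℝ, IsUnit (X x))
    (γs : ℝ → Matrix (Fin p) (Fin p) ℂ)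
    (hγs : ∀ x : ℝ, γs x = γ + σ₂ * (B x)ᴴ * (X x)⁻¹ * B x * σ₁
        - σ₁ * (B x)ᴴ * (X x)⁻¹ * B x * σ₂)
    (l : ℂ) (hl : l ∉ spectrum ℂ A)
    (S : ℝ → Matrix (Fin p) (Fin p) ℂ)
    (hS : ∀ x : ℝ, S x = 1 - (B x)ᴴ * (X x)⁻¹ * (l • 1 - A)⁻¹ * B x * σ₁)
    (u u' : ℝ → Fin p → ℂ)
    (hu : ∀ x : ℝ, HasDerivAt u (u' x) x)
    (huLDE : ∀ x : ℝ, -(σ₁.mulVec (u' x)) + (l • σ₂ + γ).mulVec (u x) = 0)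
    (y : ℝ → Fin p → ℂ) (hy : ∀ x : ℝ, y x = (S x).mulVec (u x)) :
    ∀ x : ℝ, ∃ d : Fin p → ℂ, HasDerivAt y d x ∧
      -(σ₁.mulVec d) + (l • σ₂ + γs x).mulVec (y x) = 0 := by
  intro x
  have hσdet : IsUnit σ₁.det := (Matrix.isUnit_iff_isUnit_det _).mp hσ₁inv
  have hσ1 : σ₁ * σ₁⁻¹ = 1 := Matrix.mul_nonsing_inv _ hσdet
  have hσ2 : σ₁⁻¹ * σ₁ = 1 := Matrix.nonsing_inv_mul _ hσdet
  have hXdet : ∀ t, IsUnit (X t).det := fun t => (Matrix.isUnit_iff_isUnit_det _).mp (hXinv t)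
  set Bx := B x with hBx
  set Bh := Bxᴴ with hBh
  set Z := (X x)⁻¹ with hZ
  set R := (l • (1 : Matrix (Fin n) (Fin n) ℂ) - A)⁻¹ with hR
  have hZX : Z * X x = 1 := Matrix.nonsing_inv_mul _ (hXdet x)
  have hXZ : X x * Z = 1 := Matrix.mul_nonsing_inv _ (hXdet x)
  have hRu : IsUnit (l • (1 : Matrix (Fin n) (Fin n) ℂ) - A) := by
    have h := spectrum.notMem_iff.mp hl
    rwa [Algebra.algebraMap_eq_smul_one] at h
  have hRdet : IsUnit (l • (1 : Matrix (Fin n) (Fin n) ℂ) - A).det :=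
    (Matrix.isUnit_iff_isUnit_det _).mp hRu
  have hR1 : (l • (1 : Matrix (Fin n) (Fin n) ℂ) - A) * R = 1 := Matrix.mul_nonsing_inv _ hRdet
  have hR2 : R * (l • (1 : Matrix (Fin n) (Fin n) ℂ) - A) = 1 := Matrix.nonsing_inv_mul _ hRdet
  have hAR : A * R = l • R - 1 := by
    have h : l • R - A * R = 1 := by
      rw [← hR1, Matrix.sub_mul, Matrix.smul_mul, Matrix.one_mul]
    rw [← h]; abel
  have hRA : R * A = l • R - 1 := by
    have h : l • R - R * A = 1 := by
      rw [← hR2, Matrix.mul_sub, Matrix.mul_smul, Matrix.mul_one]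
    rw [← h]; abel
  have hAZ : Aᴴ * Z = -(Z * A) - Z * (Bx * σ₁ * Bh) * Z := by
    have h2 : A * X x + X x * Aᴴ = -(Bx * σ₁ * Bh) := eq_neg_of_add_eq_zero_left (hLyap x)
    have h3 : Z * ((A * X x + X x * Aᴴ) * Z) = Z * (-(Bx * σ₁ * Bh) * Z) := by rw [h2]
    calc Aᴴ * Z = (Z * X x) * (Aᴴ * Z) := by rw [hZX, Matrix.one_mul]
    _ = Z * ((A * X x + X x * Aᴴ) * Z) - Z * (A * (X x * Z)) := by
          simp only [Matrix.mul_add, Matrix.add_mul, Matrix.mul_assoc]; abel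
    _ = Z * (-(Bx * σ₁ * Bh) * Z) - Z * (A * (X x * Z)) := by rw [h3]
    _ = -(Z * A) - Z * (Bx * σ₁ * Bh) * Z := by
          rw [hXZ]
          simp only [Matrix.neg_mul, Matrix.mul_neg, Matrix.mul_one, Matrix.mul_assoc]
          abel
  -- derivative of B
  have hBfun : B = fun t => (B t * σ₁) * σ₁⁻¹ := by
    funext t; rw [Matrix.mul_assoc, hσ1, Matrix.mul_one]
  have hBc : HasDerivAt (fun t => (B t * σ₁) * σ₁⁻¹)
      ((-(A * Bx * σ₂) - Bx * γ) * σ₁⁻¹ + (Bx * σ₁) * (0 : Matrix (Fin p) (Fin p) ℂ)) x :=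
    (hB x).matMul (hasDerivAt_const x σ₁⁻¹)
  rw [← hBfun] at hBc
  have hB' : HasDerivAt B ((-(A * Bx * σ₂) - Bx * γ) * σ₁⁻¹) x := by
    simpa using hBc
  set B' := (-(A * Bx * σ₂) - Bx * γ) * σ₁⁻¹ with hB'def
  have hB's : B' * σ₁ = -(A * Bx * σ₂) - Bx * γ := by
    rw [hB'def, Matrix.mul_assoc, hσ2, Matrix.mul_one]
  have hBh' : HasDerivAt (fun t => (B t)ᴴ) B'ᴴ x := hB'.matCT
  have F1 : σ₁ * B'ᴴ = γ * Bh - σ₂ * Bh * Aᴴ := by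
    have h : B'ᴴ = σ₁⁻¹ * (γ * Bh - σ₂ * Bh * Aᴴ) := by
      rw [hB'def, Matrix.conjTranspose_mul, Matrix.conjTranspose_nonsing_inv, hσ₁.eq]
      congr 1
      simp only [Matrix.conjTranspose_sub, Matrix.conjTranspose_neg,
        Matrix.conjTranspose_mul, hσ₂.eq, hγ, ← hBh]
      simp only [Matrix.neg_mul, Matrix.mul_assoc]
      abel
    rw [h, ← Matrix.mul_assoc, hσ1, Matrix.one_mul]
  have hZ' : HasDerivAt (fun t => (X t)⁻¹) (-(Z * (Bx * σ₂ * Bh) * Z)) x :=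
    hasDerivAt_matinv (hX x) hXinv
  -- derivative of S
  set Dc := -(B'ᴴ * Z * R * Bx * σ₁) - Bh * (-(Z * (Bx * σ₂ * Bh) * Z)) * R * Bx * σ₁
      - Bh * Z * R * B' * σ₁ with hDc
  have hSfun : S = fun t => 1 - (B t)ᴴ * (X t)⁻¹ * R * B t * σ₁ := funext hS
  have hSc : HasDerivAt (fun t => (1 : Matrix (Fin p) (Fin p) ℂ)
        - (B t)ᴴ * (X t)⁻¹ * R * B t * σ₁)
      (0 - ((((B'ᴴ * Z + Bh * (-(Z * (Bx * σ₂ * Bh) * Z))) * R + (Bh * Z) * (0 : Matrix (Fin n) (Fin n) ℂ)) * Bx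
        + ((Bh * Z) * R) * B') * σ₁ + (((Bh * Z) * R) * Bx) * (0 : Matrix (Fin p) (Fin p) ℂ))) x :=
    (hasDerivAt_const x (1 : Matrix (Fin p) (Fin p) ℂ)).sub
      ((((hBh'.matMul hZ').matMul (hasDerivAt_const x R)).matMul hB').matMul
        (hasDerivAt_const x σ₁))
  rw [← hSfun] at hSc
  have hSd : HasDerivAt S Dc x := by
    convert hSc using 1
    rw [hDc]
    simp only [Matrix.mul_zero, Matrix.zero_mul, add_zero, zero_add, zero_sub,
      Matrix.mul_add, Matrix.add_mul, Matrix.mul_sub, Matrix.sub_mul,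
      Matrix.neg_mul, Matrix.mul_neg, Matrix.mul_assoc]
    abel
  -- derivative of y
  have hyfun : y = fun t => (S t).mulVec (u t) := funext hy
  have hydc : HasDerivAt (fun t => (S t).mulVec (u t))
      (Dc.mulVec (u x) + (S x).mulVec (u' x)) x := hSd.matMulVec (hu x)
  rw [← hyfun] at hydc
  refine ⟨Dc.mulVec (u x) + (S x).mulVec (u' x), hydc, ?_⟩
  -- the key algebraic identity
  have hσD : σ₁ * Dc =
      -(l • (σ₂ * (Bh * Z * R * Bx) * σ₁)) + σ₂ * (Bh * Z * Bx) * σ₁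
      - σ₂ * (Bh * Z * Bx) * σ₁ * (Bh * Z * R * Bx) * σ₁
      - γ * (Bh * Z * R * Bx) * σ₁
      + σ₁ * (Bh * Z * Bx) * σ₂ * (Bh * Z * R * Bx) * σ₁
      + l • (σ₁ * (Bh * Z * R * Bx) * σ₂)
      - σ₁ * (Bh * Z * Bx) * σ₂
      + σ₁ * (Bh * Z * R * Bx) * γ := by
    calc σ₁ * Dc
        = -((σ₁ * B'ᴴ) * (Z * (R * (Bx * σ₁))))
          + σ₁ * (Bh * (Z * (Bx * (σ₂ * (Bh * (Z * (R * (Bx * σ₁))))))))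
          - σ₁ * (Bh * (Z * (R * (B' * σ₁)))) := by
            rw [hDc]
            simp only [Matrix.mul_add, Matrix.add_mul, Matrix.mul_sub, Matrix.sub_mul,
              Matrix.neg_mul, Matrix.mul_neg, Matrix.mul_assoc]
            abel
    _ = -((γ * Bh - σ₂ * Bh * Aᴴ) * (Z * (R * (Bx * σ₁))))
          + σ₁ * (Bh * (Z * (Bx * (σ₂ * (Bh * (Z * (R * (Bx * σ₁))))))))
          - σ₁ * (Bh * (Z * (R * (-(A * Bx * σ₂) - Bx * γ)))) := by
            rw [F1, hB's]
    _ = -(γ * (Bh * Z * R * Bx) * σ₁) + σ₂ * Bh * (Aᴴ * Z) * (R * (Bx * σ₁))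
          + σ₁ * (Bh * Z * Bx) * σ₂ * (Bh * Z * R * Bx) * σ₁
          + σ₁ * (Bh * Z * (R * A)) * (Bx * σ₂)
          + σ₁ * (Bh * Z * R * Bx) * γ := by
            simp only [Matrix.mul_add, Matrix.add_mul, Matrix.mul_sub, Matrix.sub_mul,
              Matrix.neg_mul, Matrix.mul_neg, Matrix.mul_assoc]
            abel
    _ = -(γ * (Bh * Z * R * Bx) * σ₁)
          + σ₂ * Bh * (-(Z * A) - Z * (Bx * σ₁ * Bh) * Z) * (R * (Bx * σ₁))
          + σ₁ * (Bh * Z * Bx) * σ₂ * (Bh * Z * R * Bx) * σ₁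
          + σ₁ * (Bh * Z * (l • R - 1)) * (Bx * σ₂)
          + σ₁ * (Bh * Z * R * Bx) * γ := by
            rw [hAZ, hRA]
    _ = -(γ * (Bh * Z * R * Bx) * σ₁)
          - σ₂ * Bh * Z * (A * R) * (Bx * σ₁)
          - σ₂ * (Bh * Z * Bx) * σ₁ * (Bh * Z * R * Bx) * σ₁
          + σ₁ * (Bh * Z * Bx) * σ₂ * (Bh * Z * R * Bx) * σ₁
          + l • (σ₁ * (Bh * Z * R * Bx) * σ₂)
          - σ₁ * (Bh * Z * Bx) * σ₂
          + σ₁ * (Bh * Z * R * Bx) * γ := by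
            simp only [Matrix.mul_add, Matrix.add_mul, Matrix.mul_sub, Matrix.sub_mul,
              Matrix.neg_mul, Matrix.mul_neg, Matrix.mul_smul, Matrix.smul_mul,
              Matrix.mul_one, Matrix.one_mul, Matrix.mul_assoc]
            abel
    _ = -(γ * (Bh * Z * R * Bx) * σ₁)
          - σ₂ * Bh * Z * (l • R - 1) * (Bx * σ₁)
          - σ₂ * (Bh * Z * Bx) * σ₁ * (Bh * Z * R * Bx) * σ₁
          + σ₁ * (Bh * Z * Bx) * σ₂ * (Bh * Z * R * Bx) * σ₁
          + l • (σ₁ * (Bh * Z * R * Bx) * σ₂)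
          - σ₁ * (Bh * Z * Bx) * σ₂
          + σ₁ * (Bh * Z * R * Bx) * γ := by
            rw [hAR]
    _ = -(l • (σ₂ * (Bh * Z * R * Bx) * σ₁)) + σ₂ * (Bh * Z * Bx) * σ₁
          - σ₂ * (Bh * Z * Bx) * σ₁ * (Bh * Z * R * Bx) * σ₁
          - γ * (Bh * Z * R * Bx) * σ₁
          + σ₁ * (Bh * Z * Bx) * σ₂ * (Bh * Z * R * Bx) * σ₁
          + l • (σ₁ * (Bh * Z * R * Bx) * σ₂)
          - σ₁ * (Bh * Z * Bx) * σ₂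
          + σ₁ * (Bh * Z * R * Bx) * γ := by
            simp only [Matrix.mul_add, Matrix.add_mul, Matrix.mul_sub, Matrix.sub_mul,
              Matrix.neg_mul, Matrix.mul_neg, Matrix.mul_smul, Matrix.smul_mul,
              Matrix.mul_one, Matrix.one_mul, Matrix.mul_assoc]
            abel
  have h5 : σ₁ * S x * σ₁⁻¹ = 1 - σ₁ * (Bh * Z * R * Bx) := by
    rw [hS x, ← hBx, ← hZ, ← hBh]
    calc σ₁ * (1 - Bh * Z * R * Bx * σ₁) * σ₁⁻¹
        = σ₁ * σ₁⁻¹ - σ₁ * (Bh * Z * R * Bx) * (σ₁ * σ₁⁻¹) := by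
            simp only [Matrix.mul_sub, Matrix.sub_mul, Matrix.mul_one, Matrix.one_mul,
              Matrix.mul_assoc]
    _ = 1 - σ₁ * (Bh * Z * R * Bx) := by rw [hσ1, Matrix.mul_one]
  have key : -(σ₁ * Dc) - (σ₁ * S x * σ₁⁻¹) * (l • σ₂ + γ)
      + (l • σ₂ + γs x) * S x = 0 := by
    rw [hσD, h5, hγs x, hS x, ← hBx, ← hZ, ← hBh]
    simp only [Matrix.mul_add, Matrix.add_mul, Matrix.mul_sub, Matrix.sub_mul,
      Matrix.neg_mul, Matrix.mul_neg, Matrix.mul_smul, Matrix.smul_mul,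
      Matrix.mul_one, Matrix.one_mul, neg_neg, neg_add, neg_sub, smul_sub, smul_add,
      Matrix.mul_assoc]
    abel
  -- conclude
  have hueq : σ₁.mulVec (u' x) = (l • σ₂ + γ).mulVec (u x) := by
    have h2 := eq_neg_of_add_eq_zero_left (huLDE x)
    rwa [neg_inj] at h2
  have hfix : (σ₁ * S x * σ₁⁻¹) * σ₁ = σ₁ * S x := by
    rw [Matrix.mul_assoc, hσ2, Matrix.mul_one]
  calc -(σ₁.mulVec (Dc.mulVec (u x) + (S x).mulVec (u' x)))
      + (l • σ₂ + γs x).mulVec (y x)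
      = -((σ₁ * Dc).mulVec (u x) + (σ₁ * S x).mulVec (u' x))
        + ((l • σ₂ + γs x) * S x).mulVec (u x) := by
          rw [hy x, Matrix.mulVec_add, Matrix.mulVec_mulVec, Matrix.mulVec_mulVec,
            Matrix.mulVec_mulVec]
  _ = -((σ₁ * Dc).mulVec (u x)
        + ((σ₁ * S x * σ₁⁻¹) * (l • σ₂ + γ)).mulVec (u x))
        + ((l • σ₂ + γs x) * S x).mulVec (u x) := by
          have hsub : (σ₁ * S x).mulVec (u' x)
              = ((σ₁ * S x * σ₁⁻¹) * (l • σ₂ + γ)).mulVec (u x) := by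
            conv_lhs => rw [← hfix, ← Matrix.mulVec_mulVec, hueq, Matrix.mulVec_mulVec]
          rw [hsub]
  _ = (-(σ₁ * Dc) - (σ₁ * S x * σ₁⁻¹) * (l • σ₂ + γ)
        + (l • σ₂ + γs x) * S x).mulVec (u x) := by
          simp only [Matrix.add_mulVec, Matrix.sub_mulVec, Matrix.neg_mulVec]
          abel
  _ = 0 := by rw [key, Matrix.zero_mulVec]
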